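/- Let N ≥ 2, let Ω ⊆ ℂ^N be an open set, and let u : Ω → ℝ be a C² function such that at every point z ∈ Ω the complex Hessian H_u(z) has trace zero and the second elementary symmetric polynomial of its eigenvalues is nonnegative. Then H_u(z) = 0 for every z ∈ Ω; in particular, all eigenvalues of H_u(z) vanish identically, i.e. u is pluriharmonic. (C² version of Proposition 3.4: for k ≥ 2, a function that is k-pluriharmonic is pluriharmonic.) -/

import Mathlib

/-- The complex Hessian matrix of `u : ℂ^N → ℝ` at `z`, with entries
`(∂²u/∂z_j∂z̄_k)(z)` expressed through the second real Fréchet derivative. -/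
noncomputable def complexHessian {m : ℕ} (φ : (Fin m → ℂ) → ℝ) (w : Fin m → ℂ) :
    Matrix (Fin m) (Fin m) ℂ :=
  Matrix.of fun j k =>
    (((1 / 4 : ℝ) * (fderiv ℝ (fderiv ℝ φ) w (Pi.single j 1) (Pi.single k 1)
        + fderiv ℝ (fderiv ℝ φ) w (Pi.single j Complex.I) (Pi.single k Complex.I)) : ℝ) : ℂ)
    + Complex.I * (((1 / 4 : ℝ) *
        (fderiv ℝ (fderiv ℝ φ) w (Pi.single j 1) (Pi.single k Complex.I)
        - fderiv ℝ (fderiv ℝ φ) w (Pi.single j Complex.I) (Pi.single k 1)) : ℝ) : ℂ)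

/-- The `l`-th elementary symmetric polynomial of `x ∈ ℝ^N`. -/
def esymm {N : ℕ} (l : ℕ) (x : Fin N → ℝ) : ℝ :=
  ∑ s ∈ Finset.powersetCard l (Finset.univ : Finset (Fin N)), ∏ j ∈ s, x j

open Finset in
/-- Square of a sum in terms of the sum of squares and the 2nd elementary symmetric sum. -/
lemma sq_sum_eq {ι : Type*} [DecidableEq ι] (s : Finset ι) (x : ι → ℝ) :
    (∑ i ∈ s, x i) ^ 2 =
      ∑ i ∈ s, x i ^ 2 + 2 * ∑ t ∈ s.powersetCard 2, ∏ j ∈ t, x j := by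
  induction s using Finset.induction_on with
  | empty => rw [Finset.powersetCard_eq_empty.mpr (by simp)]; simp
  | @insert a s ha ih =>
    rw [sum_insert ha, sum_insert ha, powersetCard_succ_insert ha, sum_union, sum_image]
    · have h1 : ∑ t ∈ s.powersetCard 1, ∏ j ∈ insert a t, x j
          = x a * ∑ i ∈ s, x i := by
        rw [powersetCard_one, sum_map, mul_sum]
        refine sum_congr rfl fun i hi => ?_
        have hai : a ≠ i := fun h => ha (h ▸ hi)
        simp [Finset.prod_pair hai]
      rw [h1, show Nat.succ 1 = 2 from rfl]
      linear_combination ih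
    · intro t1 h1 t2 h2 he
      have h1' : a ∉ t1 := fun h => ha ((mem_powersetCard.mp h1).1 h)
      have h2' : a ∉ t2 := fun h => ha ((mem_powersetCard.mp h2).1 h)
      rw [← erase_insert h1', ← erase_insert h2', he]
    · rw [Finset.disjoint_left]
      intro t ht ht'
      obtain ⟨t', ht', rfl⟩ := mem_image.mp ht'
      exact ha ((mem_powersetCard.mp ht).1 (mem_insert_self a t'))

/-- A Hermitian matrix with zero trace and nonnegative second elementary symmetric
polynomial of its eigenvalues is the zero matrix. -/
lemma herm_zero {n : ℕ} (A : Matrix (Fin n) (Fin n) ℂ) (h : A.IsHermitian)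
    (htr : A.trace = 0)
    (he : 0 ≤ ∑ t ∈ Finset.powersetCard 2 (Finset.univ : Finset (Fin n)),
      ∏ j ∈ t, h.eigenvalues j) : A = 0 := by
  have hspec := h.spectral_theorem
  have htr2 : A.trace = ∑ i, (h.eigenvalues i : ℂ) := by
    conv_lhs => rw [hspec]
    rw [Unitary.conjStarAlgAut_apply, Matrix.trace_mul_cycle]
    rw [Matrix.mem_unitaryGroup_iff'.mp (Matrix.IsHermitian.eigenvectorUnitary h).2, one_mul,
      Matrix.trace_diagonal]
    rfl
  have hsum : ∑ i, h.eigenvalues i = 0 := by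
    have := htr2 ▸ htr
    exact_mod_cast this
  have hkey := sq_sum_eq (Finset.univ : Finset (Fin n)) h.eigenvalues
  rw [hsum] at hkey
  have hsq : ∑ i, h.eigenvalues i ^ 2 ≤ 0 := by nlinarith
  have hev : ∀ i, h.eigenvalues i = 0 := by
    intro i
    have h0 : ∑ i, h.eigenvalues i ^ 2 = 0 :=
      le_antisymm hsq (Finset.sum_nonneg fun i _ => sq_nonneg _)
    have := (Finset.sum_eq_zero_iff_of_nonneg (fun i _ => sq_nonneg (h.eigenvalues i))).mp h0
      i (Finset.mem_univ i)
    exact pow_eq_zero_iff (by norm_num) |>.mp this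
  have h0 : h.eigenvalues = 0 := funext hev
  rwa [h0, Pi.comp_zero, RCLike.ofReal_zero,
    (by rfl : Function.const (Fin n) (0 : ℂ) = fun _ => 0),
    Matrix.diagonal_zero, map_zero] at hspec

/-- C² version of Proposition 3.4: if the complex Hessian of `u` has trace zero and
its eigenvalue vector has nonnegative second elementary symmetric polynomial at every
point, then the complex Hessian vanishes identically, i.e. `u` is pluriharmonic. -/
theorem kPluriharmonic_is_pluriharmonic (N : ℕ) (hN : 2 ≤ N)
    (Ω : Set (Fin N → ℂ)) (hΩ : IsOpen Ω)
    (u : (Fin N → ℂ) → ℝ) (hu : ContDiffOn ℝ 2 u Ω)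
    (hH : ∀ z ∈ Ω, ∃ h : (complexHessian u z).IsHermitian,
      (complexHessian u z).trace = 0 ∧ 0 ≤ esymm 2 h.eigenvalues) :
    ∀ z ∈ Ω, complexHessian u z = 0 := by
  intro z hz
  obtain ⟨h, htr, he⟩ := hH z hz
  exact herm_zero _ h htr he
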